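/- For every k ≥ 3 and ℓ ≥ (k-1)!, there exists an ℓ-partite graph G with parts V1, ..., Vℓ such that d(V_i,V_j) ≥ (k-2)/(k-1) for all i ≠ j and G contains no K^k. (Hence d^k_ℓ ≥ (k-2)/(k-1) for all ℓ.) -/

import Mathlib

open SimpleGraph Finset

theorem stmt10 {k ℓ : ℕ} (hk : 3 ≤ k) (hl : (k - 1).factorial ≤ ℓ) :
    ∃ (n : ℕ) (G : SimpleGraph (Fin n)) (_ : DecidableRel G.Adj)
      (V : Fin ℓ → Finset (Fin n)),
      (∀ v, ∃! i, v ∈ V i) ∧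
      (∀ i, ∀ x ∈ V i, ∀ y ∈ V i, ¬ G.Adj x y) ∧
      (∀ i, (V i).Nonempty) ∧
      (∀ i j, i ≠ j →
        ((k : ℚ) - 2) / ((k : ℚ) - 1) ≤ G.edgeDensity (V i) (V j)) ∧
      G.CliqueFree k := by
  set m := k - 1 with hm
  have hm2 : 2 ≤ m := by omega
  let e : Fin (ℓ * m) ≃ Fin ℓ × Fin m := finProdFinEquiv.symm
  let G : SimpleGraph (Fin (ℓ * m)) :=
    { Adj := fun x y => (e x).1 ≠ (e y).1 ∧ (e x).2 ≠ (e y).2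
      symm := ⟨fun x y h => ⟨h.1.symm, h.2.symm⟩⟩
      loopless := ⟨fun x h => h.1 rfl⟩ }
  have hdec : DecidableRel G.Adj := fun x y => instDecidableAnd
  let V : Fin ℓ → Finset (Fin (ℓ * m)) := fun i => univ.filter (fun v => (e v).1 = i)
  have hmemV : ∀ (v : Fin (ℓ * m)) (i : Fin ℓ), v ∈ V i ↔ (e v).1 = i := by
    intro v i; simp [V]
  have hcard : ∀ i : Fin ℓ, (V i).card = m := by
    intro i
    have : (V i).card = (univ : Finset (Fin m)).card := by
      apply Finset.card_bij' (fun v _ => (e v).2) (fun b _ => e.symm (i, b))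
      · intro v hv; exact mem_univ _
      · intro b hb; rw [hmemV]; simp
      · intro v hv
        rw [hmemV] at hv
        have : ((e v).1, (e v).2) = (i, (e v).2) := by rw [hv]
        calc e.symm (i, (e v).2) = e.symm ((e v).1, (e v).2) := by rw [hv]
          _ = v := by simp
      · intro b hb; simp
    simpa using this
  have hinter : ∀ i j : Fin ℓ, i ≠ j →
      (Rel.interedges G.Adj (V i) (V j)).card = m * m - m := by
    intro i j hij
    have : (Rel.interedges G.Adj (V i) (V j)).card
        = ((univ : Finset (Fin m)).offDiag).card := by
      apply Finset.card_bij' (fun p _ => ((e p.1).2, (e p.2).2))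
        (fun q _ => (e.symm (i, q.1), e.symm (j, q.2)))
      · intro p hp
        rw [Rel.mem_interedges_iff] at hp
        simp only [Finset.mem_offDiag, mem_univ, true_and]
        exact hp.2.2.2
      · intro q hq
        simp only [Finset.mem_offDiag, mem_univ, true_and] at hq
        rw [Rel.mem_interedges_iff]
        refine ⟨by rw [hmemV]; simp, by rw [hmemV]; simp, ?_, ?_⟩ <;> simp [hij, hq]
      · intro p hp
        rw [Rel.mem_interedges_iff] at hp
        have h1 := (hmemV _ _).mp hp.1
        have h2 := (hmemV _ _).mp hp.2.1
        have e1 : e.symm (i, (e p.1).2) = p.1 := by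
          calc e.symm (i, (e p.1).2) = e.symm ((e p.1).1, (e p.1).2) := by rw [h1]
            _ = p.1 := by simp
        have e2 : e.symm (j, (e p.2).2) = p.2 := by
          calc e.symm (j, (e p.2).2) = e.symm ((e p.2).1, (e p.2).2) := by rw [h2]
            _ = p.2 := by simp
        simp [e1, e2]
      · intro q hq; simp
    rw [this, Finset.offDiag_card]
    simp
  refine ⟨ℓ * m, G, hdec, V, ?_, ?_, ?_, ?_, ?_⟩
  · intro v
    refine ⟨(e v).1, (hmemV v _).mpr rfl, fun j hj => ((hmemV v j).mp hj).symm⟩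
  · intro i x hx y hy hadj
    exact hadj.1 (((hmemV x i).mp hx).trans (((hmemV y i).mp hy).symm))
  · intro i
    exact ⟨e.symm (i, ⟨0, by omega⟩), (hmemV _ _).mpr (by simp)⟩
  · intro i j hij
    have hd : G.edgeDensity (V i) (V j)
        = ((m * m - m : ℕ) : ℚ) / (((m : ℚ)) * m) := by
      rw [SimpleGraph.edgeDensity, Rel.edgeDensity, hinter i j hij, hcard, hcard]
    rw [hd]
    have hk' : (k : ℚ) = m + 1 := by
      have : k = m + 1 := by omega
      rw [this]; push_cast; ring
    have hmq : (0 : ℚ) < m := by positivity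
    rw [hk']
    have hsub : ((m * m - m : ℕ) : ℚ) = (m : ℚ) * m - m := by
      have : m ≤ m * m := Nat.le_mul_of_pos_left m (by omega)
      push_cast [Nat.cast_sub this]
      ring
    rw [hsub]
    rw [div_le_div_iff₀ (by linarith) (by positivity)]
    ring_nf
    exact le_refl _

  · intro s hs
    have hcardk : s.card = k := hs.2
    have : s.card ≤ (univ : Finset (Fin m)).card := by
      apply Finset.card_le_card_of_injOn (fun v => (e v).2)
      · intro v _; exact mem_univ _
      · intro x hx y hy hxy
        by_contra hne
        exact (hs.1 hx hy hne).2 hxy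
    simp only [card_univ, Fintype.card_fin] at this
    omega
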